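/- Let Δ be a finite set of size ω ≥ 2, let Ω = Δ × Δ, and let (Ω, ℬ) be a 2-(ω², k, λ) design with b blocks. Let G be a group of permutations of Ω, each of the form (α,β) ↦ (σ(α),τ(β)) or (α,β) ↦ (σ(β),τ(α)) for some σ, τ ∈ Sym(Δ), such that G preserves ℬ and acts transitively on ℬ. Then there exist nonnegative integers x and y such that every block B ∈ ℬ contains exactly x ordered pairs (p,q) with (p,q) ∈ Ω₁² and exactly y ordered pairs (p,q) with (p,q) ∈ Ω₂², and moreover 2ω²(ω−1)λ = b·x, ω²(ω−1)²λ = b·y, and 2y = x(ω−1). -/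

import Mathlib

open Finset

section Aux
variable {Δ : Type*} [Fintype Δ] [DecidableEq Δ]

lemma dc_aux (lam : ℕ) (ℬ : Finset (Finset (Δ × Δ)))
    (P : (Δ × Δ) × (Δ × Δ) → Prop) [DecidablePred P]
    (hP : ∀ pq, P pq → pq.1 ≠ pq.2)
    (hdes : ∀ p q : Δ × Δ, p ≠ q →
      (ℬ.filter (fun B => p ∈ B ∧ q ∈ B)).card = lam) :
    ∑ B ∈ ℬ, ((B ×ˢ B).filter P).card = (univ.filter P).card * lam := by
  have h1 : ∀ B : Finset (Δ × Δ),
      ((B ×ˢ B).filter P).card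
        = ∑ pq ∈ univ.filter P, if pq.1 ∈ B ∧ pq.2 ∈ B then 1 else 0 := by
    intro B
    rw [← Finset.card_filter]
    congr 1
    ext pq
    simp [Finset.mem_filter, Finset.mem_product]
    tauto
  calc ∑ B ∈ ℬ, ((B ×ˢ B).filter P).card
      = ∑ B ∈ ℬ, ∑ pq ∈ univ.filter P, if pq.1 ∈ B ∧ pq.2 ∈ B then 1 else 0 := by
        exact Finset.sum_congr rfl fun B _ => h1 B
    _ = ∑ pq ∈ univ.filter P, ∑ B ∈ ℬ, if pq.1 ∈ B ∧ pq.2 ∈ B then 1 else 0 :=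
        Finset.sum_comm
    _ = ∑ pq ∈ univ.filter P, lam := by
        refine Finset.sum_congr rfl fun pq hpq => ?_
        rw [← Finset.card_filter]
        exact hdes pq.1 pq.2 (hP pq (Finset.mem_filter.mp hpq).2)
    _ = (univ.filter P).card * lam := by
        rw [Finset.sum_const, smul_eq_mul]

lemma img_count (P : (Δ × Δ) × (Δ × Δ) → Prop) [DecidablePred P]
    (g : Equiv.Perm (Δ × Δ)) (hg : ∀ p q, P (p, q) ↔ P (g p, g q))
    (B : Finset (Δ × Δ)) :
    (((B.image ⇑g) ×ˢ (B.image ⇑g)).filter P).card = ((B ×ˢ B).filter P).card := by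
  symm
  apply Finset.card_bij (fun pq _ => (g pq.1, g pq.2))
  · intro pq hpq
    simp only [Finset.mem_filter, Finset.mem_product] at hpq ⊢
    refine ⟨⟨Finset.mem_image_of_mem _ hpq.1.1, Finset.mem_image_of_mem _ hpq.1.2⟩, ?_⟩
    exact (hg pq.1 pq.2).mp hpq.2
  · intro a _ c _ h
    have h1 : g a.1 = g c.1 := congrArg Prod.fst h
    have h2 : g a.2 = g c.2 := congrArg Prod.snd h
    exact Prod.ext (g.injective h1) (g.injective h2)
  · intro pq hpq
    simp only [Finset.mem_filter, Finset.mem_product, Finset.mem_image] at hpq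
    obtain ⟨⟨⟨p, hp, hp'⟩, ⟨q, hq, hq'⟩⟩, hPpq⟩ := hpq
    refine ⟨(p, q), ?_, ?_⟩
    · simp only [Finset.mem_filter, Finset.mem_product]
      refine ⟨⟨hp, hq⟩, ?_⟩
      rw [hg p q, hp', hq']
      exact hPpq
    · simp [hp', hq']

lemma cardA :
    (univ.filter (fun pq : (Δ × Δ) × (Δ × Δ) => pq.1.1 = pq.2.1 ∧ pq.1.2 ≠ pq.2.2)).card
      = Fintype.card Δ * (Fintype.card Δ * Fintype.card Δ - Fintype.card Δ) := by
  rw [show Fintype.card Δ * (Fintype.card Δ * Fintype.card Δ - Fintype.card Δ)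
      = ((univ : Finset Δ) ×ˢ (univ : Finset Δ).offDiag).card by
    simp [Finset.offDiag_card]]
  apply Finset.card_nbij' (fun pq => (pq.1.1, (pq.1.2, pq.2.2)))
      (fun x => ((x.1, x.2.1), (x.1, x.2.2)))
  · intro pq hpq
    simp only [Finset.mem_coe, Finset.mem_filter, Finset.mem_univ, true_and] at hpq
    simp [Finset.mem_product, Finset.mem_offDiag, hpq.2]
  · intro x hx
    simp only [Finset.mem_coe, Finset.mem_product, Finset.mem_offDiag] at hx
    simp [hx.2.2.2]
  · intro pq hpq
    simp only [Finset.mem_coe, Finset.mem_filter, Finset.mem_univ, true_and] at hpq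
    ext <;> simp [hpq.1]
  · intro x hx
    simp

lemma cardB :
    (univ.filter (fun pq : (Δ × Δ) × (Δ × Δ) => pq.1.1 ≠ pq.2.1 ∧ pq.1.2 = pq.2.2)).card
      = Fintype.card Δ * (Fintype.card Δ * Fintype.card Δ - Fintype.card Δ) := by
  rw [show Fintype.card Δ * (Fintype.card Δ * Fintype.card Δ - Fintype.card Δ)
      = ((univ : Finset Δ) ×ˢ (univ : Finset Δ).offDiag).card by
    simp [Finset.offDiag_card]]
  apply Finset.card_nbij' (fun pq => (pq.1.2, (pq.1.1, pq.2.1)))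
      (fun x => ((x.2.1, x.1), (x.2.2, x.1)))
  · intro pq hpq
    simp only [Finset.mem_coe, Finset.mem_filter, Finset.mem_univ, true_and] at hpq
    simp [Finset.mem_product, Finset.mem_offDiag, hpq.1]
  · intro x hx
    simp only [Finset.mem_coe, Finset.mem_product, Finset.mem_offDiag] at hx
    simp [hx.2.2.2]
  · intro pq hpq
    simp only [Finset.mem_coe, Finset.mem_filter, Finset.mem_univ, true_and] at hpq
    ext <;> simp [hpq.2]
  · intro x hx
    simp

lemma cardC :
    (univ.filter (fun pq : (Δ × Δ) × (Δ × Δ) => pq.1.1 ≠ pq.2.1 ∧ pq.1.2 ≠ pq.2.2)).card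
      = (Fintype.card Δ * Fintype.card Δ - Fintype.card Δ)
        * (Fintype.card Δ * Fintype.card Δ - Fintype.card Δ) := by
  rw [show (Fintype.card Δ * Fintype.card Δ - Fintype.card Δ)
        * (Fintype.card Δ * Fintype.card Δ - Fintype.card Δ)
      = ((univ : Finset Δ).offDiag ×ˢ (univ : Finset Δ).offDiag).card by
    simp [Finset.offDiag_card]]
  apply Finset.card_nbij' (fun pq => ((pq.1.1, pq.2.1), (pq.1.2, pq.2.2)))
      (fun x => ((x.1.1, x.2.1), (x.1.2, x.2.2)))
  · intro pq hpq
    simp only [Finset.mem_coe, Finset.mem_filter, Finset.mem_univ, true_and] at hpq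
    simp [Finset.mem_product, Finset.mem_offDiag, hpq.1, hpq.2]
  · intro x hx
    simp only [Finset.mem_coe, Finset.mem_product, Finset.mem_offDiag] at hx
    simp [hx.1.2.2, hx.2.2.2]
  · intro pq hpq
    rfl
  · intro x hx
    rfl

end Aux

theorem stmt_4 {Δ : Type*} [Fintype Δ] [DecidableEq Δ]
    (ω k lam b : ℕ) (hω : 2 ≤ ω) (hΔ : Fintype.card Δ = ω)
    (ℬ : Finset (Finset (Δ × Δ))) (hne : ℬ.Nonempty) (hb : ℬ.card = b)
    (hk : ∀ B ∈ ℬ, B.card = k) (hlam : 1 ≤ lam)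
    (hdes : ∀ p q : Δ × Δ, p ≠ q →
      (ℬ.filter (fun B => p ∈ B ∧ q ∈ B)).card = lam)
    (G : Subgroup (Equiv.Perm (Δ × Δ)))
    (hG : ∀ g ∈ G,
      (∃ σ τ : Equiv.Perm Δ, ∀ p : Δ × Δ, g p = (σ p.1, τ p.2)) ∨
      (∃ σ τ : Equiv.Perm Δ, ∀ p : Δ × Δ, g p = (σ p.2, τ p.1)))
    (hinv : ∀ g ∈ G, ∀ B ∈ ℬ, B.image (⇑g) ∈ ℬ)
    (htrans : ∀ B₁ ∈ ℬ, ∀ B₂ ∈ ℬ, ∃ g ∈ G, B₁.image (⇑g) = B₂) :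
    ∃ x y : ℕ,
      (∀ B ∈ ℬ,
        ((B ×ˢ B).filter (fun pq =>
          (pq.1.1 = pq.2.1 ∧ pq.1.2 ≠ pq.2.2) ∨
          (pq.1.1 ≠ pq.2.1 ∧ pq.1.2 = pq.2.2))).card = x ∧
        ((B ×ˢ B).filter (fun pq =>
          pq.1.1 ≠ pq.2.1 ∧ pq.1.2 ≠ pq.2.2)).card = y) ∧
      2 * ω ^ 2 * (ω - 1) * lam = b * x ∧
      ω ^ 2 * (ω - 1) ^ 2 * lam = b * y ∧
      2 * y = x * (ω - 1) := by
  classical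
  set P₁ : (Δ × Δ) × (Δ × Δ) → Prop := fun pq =>
    (pq.1.1 = pq.2.1 ∧ pq.1.2 ≠ pq.2.2) ∨ (pq.1.1 ≠ pq.2.1 ∧ pq.1.2 = pq.2.2) with hP₁def
  set P₂ : (Δ × Δ) × (Δ × Δ) → Prop := fun pq =>
    pq.1.1 ≠ pq.2.1 ∧ pq.1.2 ≠ pq.2.2 with hP₂def
  obtain ⟨B₀, hB₀⟩ := hne
  -- invariance of both predicates under every g ∈ G
  have hpres : ∀ g ∈ G, ∀ p q : Δ × Δ,
      (P₁ (p, q) ↔ P₁ (g p, g q)) ∧ (P₂ (p, q) ↔ P₂ (g p, g q)) := by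
    intro g hg p q
    rcases hG g hg with ⟨σ, τ, h⟩ | ⟨σ, τ, h⟩ <;>
      · rw [hP₁def, hP₂def]
        constructor <;>
          (simp only []
           first
           | (simp [h p, h q, Prod.ext_iff, Equiv.apply_eq_iff_eq]; done)
           | (simp [h p, h q, Prod.ext_iff, Equiv.apply_eq_iff_eq]; tauto))
  -- constancy across blocks
  have hconst : ∀ B ∈ ℬ,
      ((B ×ˢ B).filter P₁).card = ((B₀ ×ˢ B₀).filter P₁).card ∧
      ((B ×ˢ B).filter P₂).card = ((B₀ ×ˢ B₀).filter P₂).card := by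
    intro B hB
    obtain ⟨g, hgG, hgB⟩ := htrans B₀ hB₀ B hB
    constructor
    · rw [← hgB]; exact img_count P₁ g (fun p q => (hpres g hgG p q).1) B₀
    · rw [← hgB]; exact img_count P₂ g (fun p q => (hpres g hgG p q).2) B₀
  refine ⟨((B₀ ×ˢ B₀).filter P₁).card, ((B₀ ×ˢ B₀).filter P₂).card,
    hconst, ?_, ?_, ?_⟩
  all_goals {
    have hP₁ne : ∀ pq : (Δ × Δ) × (Δ × Δ), P₁ pq → pq.1 ≠ pq.2 := by
      intro pq h hc
      rw [hP₁def] at h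
      rw [hc] at h
      tauto
    have hP₂ne : ∀ pq : (Δ × Δ) × (Δ × Δ), P₂ pq → pq.1 ≠ pq.2 := by
      intro pq h hc
      rw [hP₂def] at h
      rw [hc] at h
      tauto
    have hsum₁ := dc_aux lam ℬ P₁ hP₁ne hdes
    have hsum₂ := dc_aux lam ℬ P₂ hP₂ne hdes
    have hc₁ : ∑ B ∈ ℬ, ((B ×ˢ B).filter P₁).card = b * ((B₀ ×ˢ B₀).filter P₁).card := by
      rw [Finset.sum_congr rfl (fun B hB => (hconst B hB).1), Finset.sum_const,
        smul_eq_mul, hb]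
    have hc₂ : ∑ B ∈ ℬ, ((B ×ˢ B).filter P₂).card = b * ((B₀ ×ˢ B₀).filter P₂).card := by
      rw [Finset.sum_congr rfl (fun B hB => (hconst B hB).2), Finset.sum_const,
        smul_eq_mul, hb]
    -- compute the universal counts
    have hU₁ : (univ.filter P₁).card = 2 * (ω * (ω * ω - ω)) := by
      have hsplit : univ.filter P₁
          = univ.filter (fun pq : (Δ × Δ) × (Δ × Δ) => pq.1.1 = pq.2.1 ∧ pq.1.2 ≠ pq.2.2)
            ∪ univ.filter (fun pq : (Δ × Δ) × (Δ × Δ) => pq.1.1 ≠ pq.2.1 ∧ pq.1.2 = pq.2.2) := by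
        ext pq
        simp [hP₁def]
      rw [hsplit, Finset.card_union_of_disjoint, cardA, cardB, hΔ]
      · ring
      · rw [Finset.disjoint_left]
        intro pq h1 h2
        simp only [Finset.mem_filter] at h1 h2
        exact h2.2.1 h1.2.1
    have hU₂ : (univ.filter P₂).card = (ω * ω - ω) * (ω * ω - ω) := by
      have hsplit : univ.filter P₂
          = univ.filter (fun pq : (Δ × Δ) × (Δ × Δ) => pq.1.1 ≠ pq.2.1 ∧ pq.1.2 ≠ pq.2.2) := by
        ext pq
        simp [hP₂def]
      rw [hsplit, cardC, hΔ]
    obtain ⟨m, rfl⟩ : ∃ m, ω = m + 2 := ⟨ω - 2, by omega⟩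
    have hsq : (m + 2) * (m + 2) - (m + 2) = (m + 2) * (m + 1) := by
      have : (m + 2) * (m + 2) = (m + 2) * (m + 1) + (m + 2) := by ring
      rw [this, Nat.add_sub_cancel]
    have hx : b * ((B₀ ×ˢ B₀).filter P₁).card = 2 * ((m + 2) * ((m + 2) * (m + 1))) * lam := by
      rw [← hc₁, hsum₁, hU₁, hsq]
    have hy : b * ((B₀ ×ˢ B₀).filter P₂).card
        = ((m + 2) * (m + 1)) * ((m + 2) * (m + 1)) * lam := by
      rw [← hc₂, hsum₂, hU₂, hsq]
    have hω1 : m + 2 - 1 = m + 1 := by omega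
    first
    | · rw [hx, hω1]; ring
    | · rw [hy, hω1]; ring
    | · rw [hω1]
        have hbpos : 0 < b := by rw [← hb]; exact Finset.card_pos.mpr ⟨B₀, hB₀⟩
        apply Nat.eq_of_mul_eq_mul_left hbpos
        calc b * (2 * ((B₀ ×ˢ B₀).filter P₂).card)
            = 2 * (b * ((B₀ ×ˢ B₀).filter P₂).card) := by ring
          _ = 2 * (((m + 2) * (m + 1)) * ((m + 2) * (m + 1)) * lam) := by rw [hy]
          _ = (2 * ((m + 2) * ((m + 2) * (m + 1))) * lam) * (m + 1) := by ring
          _ = (b * ((B₀ ×ˢ B₀).filter P₁).card) * (m + 1) := by rw [hx]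
          _ = b * (((B₀ ×ˢ B₀).filter P₁).card * (m + 1)) := by ring
  }
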